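/- For every integer r ≥ 2 and any prime p with p ≡ 1 + 2^(r−1) (mod 2^r), setting m = 2^(r+1)·p, we have f(m) = 1 and d(m) = 2^r. -/

import Mathlib

/-- The Carmichael function: the exponent of the multiplicative group mod `m`. -/
noncomputable def carmichael (m : ℕ) : ℕ := Monoid.exponent (ZMod m)ˣ

/-- The radical of `m`: the product of the distinct primes dividing `m`. -/
def radN (m : ℕ) : ℕ := ∏ p ∈ m.primeFactors, p

/-- `δ(m) = 2` if `4 ∣ m`, else `1`. -/
def deltaN (m : ℕ) : ℕ := if 4 ∣ m then 2 else 1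

/-- `d(m) = gcd(m, δ(m)·φ(rad m))`. -/
def dFun (m : ℕ) : ℕ := Nat.gcd m (deltaN m * Nat.totient (radN m))

/-- `f(m) = gcd(m, δ(m)·λ(m)·φ(rad m)/φ(m))`. -/
noncomputable def fFun (m : ℕ) : ℕ :=
  Nat.gcd m (deltaN m * carmichael m * Nat.totient (radN m) / Nat.totient m)

lemma carmichael_mul (a b : ℕ) (h : Nat.Coprime a b) :
    carmichael (a * b) = Nat.lcm (carmichael a) (carmichael b) := by
  unfold carmichael
  rw [Monoid.exponent_eq_of_mulEquiv
    ((Units.mapEquiv (ZMod.chineseRemainder h).toMulEquiv).trans MulEquiv.prodUnits)]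
  exact Monoid.exponent_prod

lemma carmichael_prime (p : ℕ) (hp : p.Prime) : carmichael p = p - 1 := by
  haveI := Fact.mk hp
  unfold carmichael
  rw [IsCyclic.exponent_eq_card, Nat.card_eq_fintype_card, ZMod.card_units_eq_totient, Nat.totient_prime hp]

lemma odd_pow_two_pow (a : ℤ) (ha : Odd a) :
    ∀ k, 1 ≤ k → (2:ℤ)^(k+2) ∣ a^(2^k) - 1 := by
  intro k hk
  induction k with
  | zero => omega
  | succ n ih =>
    rcases Nat.eq_or_lt_of_le hk with h1 | h1
    · -- n + 1 = 1, so n = 0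
      obtain ⟨b, rfl⟩ := ha
      have hn : n = 0 := by omega
      subst hn
      have : (2*b+1)^(2^1) - 1 = 4 * (b * (b+1)) := by ring
      rw [this]
      rcases Int.even_or_odd b with ⟨c, hc⟩ | ⟨c, hc⟩
      · exact ⟨c * (b+1), by rw [hc]; ring⟩
      · exact ⟨b * (c+1), by rw [hc]; ring⟩
    · have hn : 1 ≤ n := by omega
      obtain ⟨c, hc⟩ := ih hn
      have h2 : a^(2^(n+1)) - 1 = (a^(2^n) - 1) * (a^(2^n) + 1) := by
        rw [pow_succ, pow_mul]; ring
      have he : Even (a^(2^n) + 1) := by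
        rcases ha.pow (n := 2^n) with ⟨d, hd⟩
        exact ⟨d + 1, by rw [hd]; ring⟩
      obtain ⟨e, he⟩ := he
      rw [h2, hc, he]
      exact ⟨c * e, by ring⟩

lemma carmichael_two_pow_dvd (r : ℕ) (hr : 2 ≤ r) :
    carmichael (2^(r+1)) ∣ 2^(r-1) := by
  apply Monoid.exponent_dvd_of_forall_pow_eq_one
  intro u
  have hco : Nat.Coprime ((u : ZMod (2^(r+1)))).val (2^(r+1)) :=
    ZMod.val_coe_unit_coprime u
  have hodd : Odd (((u : ZMod (2^(r+1)))).val : ℤ) := by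
    rcases Nat.even_or_odd ((u : ZMod (2^(r+1)))).val with he | ho
    · exfalso
      have h2 : 2 ∣ ((u : ZMod (2^(r+1)))).val := he.two_dvd
      have h2N : (2:ℕ) ∣ 2^(r+1) := dvd_pow_self 2 (by omega)
      have hg := Nat.dvd_gcd h2 h2N
      rw [Nat.Coprime.gcd_eq_one hco] at hg
      omega
    · exact_mod_cast ho
  have hdvd : (2:ℤ)^(r+1) ∣ (((u : ZMod (2^(r+1)))).val : ℤ)^(2^(r-1)) - 1 := by
    have h := odd_pow_two_pow _ hodd (r-1) (by omega)
    have hre : r - 1 + 2 = r + 1 := by omega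
    rwa [hre] at h
  have hcast : ((((u : ZMod (2^(r+1)))).val : ZMod (2^(r+1))))^(2^(r-1)) = 1 := by
    have h0 : ((((((u : ZMod (2^(r+1)))).val : ℤ))^(2^(r-1)) - 1 : ℤ) : ZMod (2^(r+1))) = 0 := by
      rw [ZMod.intCast_zmod_eq_zero_iff_dvd]
      exact_mod_cast hdvd
    push_cast at h0
    linear_combination h0
  rw [ZMod.natCast_val, ZMod.cast_id] at hcast
  ext
  rw [Units.val_pow_eq_pow_val, hcast, Units.val_one]

theorem pair_one_two_pow (r p : ℕ) (hr : 2 ≤ r) (hp : p.Prime)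
    (hcong : p ≡ 1 + 2 ^ (r - 1) [MOD 2 ^ r]) :
    fFun (2 ^ (r + 1) * p) = 1 ∧ dFun (2 ^ (r + 1) * p) = 2 ^ r := by
  obtain ⟨q, hq⟩ : ∃ q, q = 2^(r-1) := ⟨_, rfl⟩
  have hr1 : r - 1 + 1 = r := by omega
  have hq2 : 2^r = q*2 := by rw [hq, ← pow_succ, hr1]
  have hq_pos : 0 < q := by rw [hq]; positivity
  have hq_two : 2 ≤ q := by
    rw [hq]
    calc 2 = 2^1 := by norm_num
    _ ≤ 2^(r-1) := Nat.pow_le_pow_right (by norm_num) (by omega)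
  have h2q : 2 ∣ q := by rw [hq]; exact dvd_pow_self 2 (by omega)
  -- extract p = 1 + q * t with t odd
  have hmod : p % (2^r) = 1 + q := by
    have hcc : p % 2^r = (1 + 2^(r-1)) % 2^r := hcong
    rw [← hq] at hcc
    rw [hcc, Nat.mod_eq_of_lt (by omega)]
  have hp_eq : p = 2^r * (p / 2^r) + (1 + q) := by
    conv_lhs => rw [← Nat.div_add_mod p (2^r)]
    rw [hmod]
  set k := p / 2^r with hk
  set t := 2*k+1 with ht
  have hpt : p = 1 + q * t := by rw [hp_eq, hq2, ht]; ring
  have hp1 : p - 1 = q * t := by rw [hpt, Nat.add_sub_cancel_left]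
  have ht_pos : 0 < t := by omega
  have hodd_t : Odd t := ⟨k, by omega⟩
  have hodd_p : Odd p := by
    obtain ⟨q', hq'⟩ := h2q
    exact ⟨q' * t, by rw [hpt, hq']; ring⟩
  have hcop2p : Nat.Coprime 2 p := hodd_p.coprime_two_left
  have hcop : Nat.Coprime (2^(r+1)) p := hcop2p.pow_left _
  -- carmichael
  have hc2 : carmichael (2^(r+1)) ∣ q := by rw [hq]; exact carmichael_two_pow_dvd r hr
  have hqdvd : q ∣ p - 1 := ⟨t, hp1⟩
  have hcm : carmichael (2^(r+1) * p) = p - 1 := by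
    rw [carmichael_mul _ _ hcop, carmichael_prime p hp]
    exact Nat.dvd_antisymm (Nat.lcm_dvd (hc2.trans hqdvd) dvd_rfl) (Nat.dvd_lcm_right _ _)
  -- totients
  have htotp : Nat.totient p = p - 1 := Nat.totient_prime hp
  have htot2 : Nat.totient (2^(r+1)) = 2^r := by
    rw [Nat.totient_prime_pow Nat.prime_two (by omega)]
    simp
  have htotm : Nat.totient (2^(r+1)*p) = 2^r * (p-1) := by
    rw [Nat.totient_mul hcop, htot2, htotp]
  -- radical
  have hp_ne2 : p ≠ 2 := by
    intro h; rw [h] at hodd_p; exact (by norm_num : ¬ Odd 2) hodd_p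
  have hrad : radN (2^(r+1)*p) = 2*p := by
    unfold radN
    rw [Nat.primeFactors_mul (by positivity) hp.pos.ne',
      Nat.primeFactors_pow _ (by omega : r+1 ≠ 0),
      Nat.Prime.primeFactors Nat.prime_two, Nat.Prime.primeFactors hp,
]
    rw [show ({2} ∪ {p} : Finset ℕ) = insert 2 {p} from rfl,
      Finset.prod_insert (by simp [Ne.symm hp_ne2]), Finset.prod_singleton]
  have htotr : Nat.totient (radN (2^(r+1)*p)) = p - 1 := by
    rw [hrad, Nat.totient_mul hcop2p, Nat.totient_two, htotp, one_mul]
  -- delta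
  have hdel : deltaN (2^(r+1)*p) = 2 := by
    unfold deltaN
    rw [if_pos]
    exact dvd_mul_of_dvd_left
      (show 4 ∣ 2^(r+1) from pow_dvd_pow 2 (show 2 ≤ r+1 by omega)) p
  -- coprimality with t
  have hppred : Nat.Coprime p (p - 1) := by
    have h1 : p - 1 + 1 = p := Nat.succ_pred_eq_of_pos hp.pos
    rw [← h1]; simp
  have htdvd : t ∣ p - 1 := ⟨q, by rw [hp1]; ring⟩
  have hcopt : Nat.Coprime (2^(r+1)*p) t :=
    Nat.Coprime.mul ((hodd_t.coprime_two_left).pow_left _)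
      (hppred.coprime_dvd_right htdvd)
  constructor
  · unfold fFun
    rw [hdel, hcm, htotr, htotm]
    have hdiv : 2 * (p-1) * (p-1) / (2^r * (p-1)) = t := by
      rw [hp1, hq2]
      have hrw : 2 * (q*t) * (q*t) = (q*2*(q*t)) * t := by ring
      rw [hrw, Nat.mul_div_cancel_left _ (by positivity)]
    rw [hdiv]
    exact hcopt
  · unfold dFun
    rw [hdel, htotr, hp1]
    have h1 : 2^(r+1)*p = 2^r*(2*p) := by rw [pow_succ]; ring
    have h2 : 2*(q*t) = 2^r*t := by rw [hq2]; ring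
    rw [h1, h2, Nat.gcd_mul_left]
    have h3 : Nat.Coprime (2*p) t :=
      Nat.Coprime.mul (hodd_t.coprime_two_left) (hppred.coprime_dvd_right htdvd)
    rw [Nat.Coprime.gcd_eq_one h3, mul_one]
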